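/- Let λ > μ be adjacent partitions of n in the dominance order (λ covers μ). Then μ is obtained from λ by moving a single box: there exist indices i < j such that μᵢ = λᵢ − 1, μⱼ = λⱼ + 1, and μₗ = λₗ for all other l. -/

import Mathlib

/-- A partition of `n`, encoded as a weakly decreasing function `ℕ → ℕ`
(0-indexed parts) vanishing from index `n` on and with parts summing to `n`. -/
def IsPartitionOf (n : ℕ) (l : ℕ → ℕ) : Prop :=
  (∀ i j, i ≤ j → l j ≤ l i) ∧ (∀ i, n ≤ i → l i = 0) ∧
    (∑ i ∈ Finset.range n, l i = n)

/-- The dominance order: every partial sum of `l` is at most that of `m`. -/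
def DomLE (l m : ℕ → ℕ) : Prop :=
  ∀ k, ∑ i ∈ Finset.range k, l i ≤ ∑ i ∈ Finset.range k, m i

/-- If `l` covers `m` in the dominance order on partitions of `n` (i.e. `m < l` and
nothing lies strictly between), then `m` is obtained from `l` by moving a single
box from some row `i` down to some row `j > i`. -/
theorem dominance_cover_single_box_move
    (n : ℕ) (l m : ℕ → ℕ) (hl : IsPartitionOf n l) (hm : IsPartitionOf n m)
    (hle : DomLE m l) (hne : m ≠ l)
    (hcov : ∀ v, IsPartitionOf n v → DomLE m v → DomLE v l → v = m ∨ v = l) :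
    ∃ i j, i < j ∧ m i + 1 = l i ∧ m j = l j + 1 ∧
      ∀ t, t ≠ i → t ≠ j → m t = l t := by
  classical
  obtain ⟨lmono, lzero, lsum⟩ := hl
  obtain ⟨mmono, mzero, msum⟩ := hm
  -- i : first index where m and l differ (there m i < l i)
  have hex : ∃ t, m t ≠ l t := by
    by_contra h; push_neg at h; exact hne (funext h)
  set i := Nat.find hex with hidef
  have hi_ne : m i ≠ l i := Nat.find_spec hex
  have hi_min : ∀ t, t < i → m t = l t := fun t ht => by
    have := Nat.find_min hex ht; simpa using this
  have hSi : ∑ t ∈ Finset.range i, m t = ∑ t ∈ Finset.range i, l t :=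
    Finset.sum_congr rfl fun t ht => hi_min t (Finset.mem_range.mp ht)
  have hi_lt : m i < l i := by
    have h1 := hle (i + 1)
    rw [Finset.sum_range_succ, Finset.sum_range_succ, hSi] at h1
    omega
  have hi_n : i < n := by
    by_contra h; push_neg at h
    have := lzero i h; omega
  -- j : first index where m j > l j
  have hexj : ∃ t, l t < m t := by
    by_contra h; push_neg at h
    have : ∑ t ∈ Finset.range n, m t < ∑ t ∈ Finset.range n, l t :=
      Finset.sum_lt_sum (fun t _ => h t) ⟨i, Finset.mem_range.mpr hi_n, hi_lt⟩
    omega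
  set j := Nat.find hexj with hjdef
  have hj_lt : l j < m j := Nat.find_spec hexj
  have hj_min : ∀ t, t < j → m t ≤ l t := fun t ht => by
    have := Nat.find_min hexj ht; omega
  have hij : i < j := by
    rcases lt_trichotomy i j with h | h | h
    · exact h
    · rw [h] at hi_lt; omega
    · have := hi_min j h; omega
  have hj_n : j < n := by
    by_contra h; push_neg at h
    have := mzero j h; omega
  have hlj_li : l j + 2 ≤ l i := by
    have := mmono i j (le_of_lt hij); omega
  -- a : last index with l a = l i
  set a := Nat.findGreatest (fun t => l t = l i) n with hadef
  have ha_spec : l a = l i := Nat.findGreatest_spec (P := fun t => l t = l i) (le_of_lt hi_n) rfl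
  have ha_ge : i ≤ a := Nat.le_findGreatest (P := fun t => l t = l i) (le_of_lt hi_n) rfl
  have ha_gt : ∀ t, a < t → l t < l a := by
    intro t ht
    have hne' : l t ≠ l i := by
      by_cases htn : t ≤ n
      · exact Nat.findGreatest_is_greatest (P := fun t => l t = l i) ht htn
      · have := lzero t (by omega); omega
    have hle' : l t ≤ l i := by
      have := lmono i t (by omega); omega
    omega
  -- b : first index with l b = l j
  have hb_ex : ∃ t, l t = l j := ⟨j, rfl⟩
  set b := Nat.find hb_ex with hbdef
  have hb_spec : l b = l j := Nat.find_spec hb_ex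
  have hb_le : b ≤ j := Nat.find_min' hb_ex rfl
  have hb_lt : ∀ t, t < b → l b < l t := fun t ht => by
    have h1 : l t ≠ l j := Nat.find_min hb_ex ht
    have h2 : l b ≤ l t := lmono t b (le_of_lt ht)
    omega
  have hab : a < b := by
    by_contra h; push_neg at h
    have : l a ≤ l b := lmono b a h
    omega
  -- the intermediate partition v : move one box from row a to row b of l
  set v : ℕ → ℕ := fun t => if t = a then l a - 1 else if t = b then l b + 1 else l t
    with hvdef
  have hva : v a = l a - 1 := by simp [hvdef]
  have hvb : v b = l b + 1 := by
    simp [hvdef, show b ≠ a by omega]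
  have hvt : ∀ t, t ≠ a → t ≠ b → v t = l t := by
    intro t h1 h2; simp [hvdef, h1, h2]
  -- v is weakly decreasing
  have hvstep : ∀ t, v (t + 1) ≤ v t := by
    intro t
    by_cases hta : t = a
    · rw [hta, hva]
      by_cases hne' : a + 1 = b
      · rw [hne', hvb]; omega
      · rw [hvt _ (by omega) hne']
        have := ha_gt (a + 1) (by omega)
        omega
    · by_cases htb : t = b
      · rw [htb, hvb, hvt (b + 1) (by omega) (by omega)]
        have := lmono b (b + 1) (by omega)
        omega
      · rw [hvt t hta htb]
        by_cases h1 : t + 1 = a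
        · rw [h1, hva]
          have h2 := lmono t a (by omega)
          omega
        · by_cases h2 : t + 1 = b
          · rw [h2, hvb]
            have := hb_lt t (by omega)
            omega
          · rw [hvt _ h1 h2]; exact lmono t (t + 1) (by omega)
  have hvmono : ∀ p q, p ≤ q → v q ≤ v p := fun p q h =>
    antitone_nat_of_succ_le hvstep h
  have hvzero : ∀ t, n ≤ t → v t = 0 := by
    intro t ht
    rw [hvt t (by omega) (by omega)]
    exact lzero t ht
  -- partial-sum computations for v
  have key3 : ∀ k, k ≤ a → ∑ t ∈ Finset.range k, v t = ∑ t ∈ Finset.range k, l t := by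
    intro k hk
    refine Finset.sum_congr rfl fun t ht => ?_
    have := Finset.mem_range.mp ht
    exact hvt t (by omega) (by omega)
  have key1 : ∀ k, a < k → k ≤ b →
      (∑ t ∈ Finset.range k, v t) + 1 = ∑ t ∈ Finset.range k, l t := by
    intro k h1 h2
    have hamem : a ∈ Finset.range k := Finset.mem_range.mpr h1
    rw [← Finset.add_sum_erase _ v hamem, ← Finset.add_sum_erase _ l hamem]
    have hrest : ∑ t ∈ (Finset.range k).erase a, v t
        = ∑ t ∈ (Finset.range k).erase a, l t := by
      refine Finset.sum_congr rfl fun t ht => ?_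
      obtain ⟨htne, htmem⟩ := Finset.mem_erase.mp ht
      have := Finset.mem_range.mp htmem
      exact hvt t htne (by omega)
    rw [hrest, hva]
    omega
  have key2 : ∀ k, b < k →
      ∑ t ∈ Finset.range k, v t = ∑ t ∈ Finset.range k, l t := by
    intro k h2
    have hamem : a ∈ Finset.range k := Finset.mem_range.mpr (by omega)
    have hbmem : b ∈ (Finset.range k).erase a :=
      Finset.mem_erase.mpr ⟨by omega, Finset.mem_range.mpr h2⟩
    rw [← Finset.add_sum_erase _ v hamem, ← Finset.add_sum_erase _ l hamem,
      ← Finset.add_sum_erase _ v hbmem, ← Finset.add_sum_erase _ l hbmem]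
    have hrest : ∑ t ∈ ((Finset.range k).erase a).erase b, v t
        = ∑ t ∈ ((Finset.range k).erase a).erase b, l t := by
      refine Finset.sum_congr rfl fun t ht => ?_
      obtain ⟨htb, ht2⟩ := Finset.mem_erase.mp ht
      obtain ⟨hta, _⟩ := Finset.mem_erase.mp ht2
      exact hvt t hta htb
    rw [hrest, hva, hvb]
    omega
  have hvsum : ∑ t ∈ Finset.range n, v t = n := by
    rw [key2 n (by omega)]; exact lsum
  have hvpart : IsPartitionOf n v := ⟨hvmono, hvzero, hvsum⟩
  have hdomvl : DomLE v l := by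
    intro k
    rcases le_or_gt k a with h | h
    · rw [key3 k h]
    · rcases le_or_gt k b with h2 | h2
      · have := key1 k h h2; omega
      · rw [key2 k h2]
  -- strictness of the dominance m < l on the interval (i, j]
  have hstrict : ∀ k, i < k → k ≤ j →
      ∑ t ∈ Finset.range k, m t < ∑ t ∈ Finset.range k, l t := by
    intro k h1 h2
    have hsplit : ∀ f : ℕ → ℕ, ∑ t ∈ Finset.range k, f t
        = (∑ t ∈ Finset.range i, f t) + ∑ t ∈ Finset.Ico i k, f t := by
      intro f
      rw [Finset.range_eq_Ico, Finset.range_eq_Ico]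
      exact (Finset.sum_Ico_consecutive f (Nat.zero_le i) (le_of_lt h1)).symm
    rw [hsplit m, hsplit l, hSi]
    have hIco : ∑ t ∈ Finset.Ico i k, m t < ∑ t ∈ Finset.Ico i k, l t := by
      refine Finset.sum_lt_sum (fun t ht => ?_) ⟨i, Finset.mem_Ico.mpr ⟨le_refl i, h1⟩, hi_lt⟩
      have := Finset.mem_Ico.mp ht
      exact hj_min t (by omega)
    omega
  have hdommv : DomLE m v := by
    intro k
    rcases le_or_gt k a with h | h
    · rw [key3 k h]; exact hle k
    · rcases le_or_gt k b with h2 | h2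
      · have h3 := key1 k h h2
        have h4 := hstrict k (by omega) (by omega)
        omega
      · rw [key2 k h2]; exact hle k
  have hvne : v ≠ l := by
    intro hc
    have : v a = l a := by rw [hc]
    rw [hva] at this; omega
  rcases hcov v hvpart hdommv hdomvl with hvm | hvl
  · refine ⟨a, b, hab, ?_, ?_, ?_⟩
    · have h1 : m a = l a - 1 := by rw [← hvm, hva]
      omega
    · rw [← hvm, hvb]
    · intro t h1 h2
      rw [← hvm, hvt t h1 h2]
  · exact absurd hvl hvne
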